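/- Let P be a finite set of points in ℝ² and let D be a closed disk with |D ∩ P| = j for some integer j ≥ 1. Then there exists a closed disk D' such that D' ∩ P ⊆ D ∩ P and |D' ∩ P| = j − 1. -/

import Mathlib

open Set MeasureTheory

/-- There is a point near `c`, not in the finite set `P`, from which all points
of `P` have pairwise distinct distances. -/
lemma exists_good_center (P : Set (EuclideanSpace ℝ (Fin 2))) (hP : P.Finite)
    (c : EuclideanSpace ℝ (Fin 2)) (ε : ℝ) (hε : 0 < ε) :
    ∃ c' ∈ Metric.ball c ε, c' ∉ P ∧ Set.InjOn (fun p => dist c' p) P := by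
  classical
  set B : Set (EuclideanSpace ℝ (Fin 2)) :=
    P ∪ ⋃ p ∈ P, ⋃ q ∈ P, {x | p ≠ q ∧ dist x p = dist x q} with hB
  have hBnull : volume B = 0 := by
    rw [hB]
    refine measure_union_null ?_ ?_
    · exact Set.Finite.measure_zero hP _
    · refine (measure_biUnion_null_iff hP.countable).2 fun p hp => ?_
      refine (measure_biUnion_null_iff hP.countable).2 fun q hq => ?_
      by_cases hpq : p = q
      · have : {x : EuclideanSpace ℝ (Fin 2) | p ≠ q ∧ dist x p = dist x q} = ∅ := by
          ext x; simp [hpq]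
        simp [this]
      · have hsub : {x : EuclideanSpace ℝ (Fin 2) | p ≠ q ∧ dist x p = dist x q}
            ⊆ (AffineSubspace.perpBisector p q : Set (EuclideanSpace ℝ (Fin 2))) := by
          intro x hx
          exact (AffineSubspace.mem_perpBisector_iff_dist_eq).2 hx.2
        refine measure_mono_null hsub ?_
        exact Measure.addHaar_affineSubspace volume _ (by simpa using hpq)
  have hball : 0 < volume (Metric.ball c ε) := Metric.measure_ball_pos _ _ hε
  have hne : (Metric.ball c ε \ B).Nonempty := by
    by_contra h
    rw [Set.not_nonempty_iff_eq_empty, Set.diff_eq_empty] at h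
    exact absurd (le_antisymm ((measure_mono h).trans hBnull.le) (zero_le)) hball.ne'
  obtain ⟨c', hc'ball, hc'B⟩ := hne
  refine ⟨c', hc'ball, fun h => hc'B (Or.inl h), ?_⟩
  intro p hp q hq hdist
  by_contra hpq
  exact hc'B (Or.inr (Set.mem_biUnion hp (Set.mem_biUnion hq ⟨hpq, hdist⟩)))

/-- Shrinking lemma for disks: if a closed disk `D` contains
exactly `j ≥ 1` points of a finite planar point set `P`, then there is a closed
disk `D'` with `D' ∩ P ⊆ D ∩ P` and `|D' ∩ P| = j - 1`. -/
theorem disk_shrinking_one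
    (P : Set (EuclideanSpace ℝ (Fin 2))) (hP : P.Finite)
    (c : EuclideanSpace ℝ (Fin 2)) (r : ℝ) (hr : 0 ≤ r)
    (j : ℕ) (hj : 1 ≤ j)
    (hcard : (P ∩ Metric.closedBall c r).ncard = j) :
    ∃ (c' : EuclideanSpace ℝ (Fin 2)) (r' : ℝ), 0 ≤ r' ∧
      P ∩ Metric.closedBall c' r' ⊆ P ∩ Metric.closedBall c r ∧
      (P ∩ Metric.closedBall c' r').ncard = j - 1 := by
  classical
  set S : Set (EuclideanSpace ℝ (Fin 2)) := P ∩ Metric.closedBall c r with hSdef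
  have hSfin : S.Finite := hP.inter_of_left _
  -- choose ε
  set t : Finset (EuclideanSpace ℝ (Fin 2)) :=
    hP.toFinset.filter (fun p => r < dist c p) with ht
  set ε : ℝ := if h : t.Nonempty then (t.inf' h (fun p => dist c p - r)) / 3 else 1 with hε
  have hεpos : 0 < ε := by
    rw [hε]
    split_ifs with h
    · have : 0 < t.inf' h (fun p => dist c p - r) := by
        rw [Finset.lt_inf'_iff]
        intro p hp
        rw [ht, Finset.mem_filter] at hp
        linarith [hp.2]
      linarith
    · norm_num
  have hfar : ∀ p ∈ P, p ∉ Metric.closedBall c r → r + 3 * ε ≤ dist c p := by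
    intro p hp hpout
    have hlt : r < dist c p := by
      simpa [Metric.mem_closedBall, dist_comm] using hpout
    have hpt : p ∈ t := by
      rw [ht, Finset.mem_filter]
      exact ⟨hP.mem_toFinset.2 hp, hlt⟩
    have hTne : t.Nonempty := ⟨p, hpt⟩
    have := Finset.inf'_le (fun p => dist c p - r) hpt
    rw [hε, dif_pos hTne]
    linarith [this]
  obtain ⟨c', hc'ball, hc'P, hinj⟩ := exists_good_center P hP c ε hεpos
  have hcc' : dist c c' < ε := by simpa [dist_comm] using hc'ball
  -- distances from c' to points of S / outside
  have hSdist : ∀ p ∈ S, dist c' p ≤ r + ε := by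
    intro p hp
    have h1 : dist c p ≤ r := by
      simpa [Metric.mem_closedBall, dist_comm] using hp.2
    calc dist c' p ≤ dist c' c + dist c p := dist_triangle _ _ _
    _ ≤ r + ε := by rw [dist_comm] at hcc'; linarith
  have houtdist : ∀ p ∈ P, p ∉ Metric.closedBall c r → r + 2 * ε < dist c' p := by
    intro p hp hpout
    have h1 := hfar p hp hpout
    have := dist_triangle c c' p
    linarith
  -- S is nonempty
  have hSne : S.Nonempty := by
    rw [← Set.ncard_pos hSfin, hcard]; omega
  set s : Finset (EuclideanSpace ℝ (Fin 2)) := hSfin.toFinset with hs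
  have hsne : s.Nonempty := by
    obtain ⟨p, hp⟩ := hSne
    exact ⟨p, hSfin.mem_toFinset.2 hp⟩
  obtain ⟨x, hxs, hxmax⟩ := s.exists_max_image (fun p => dist c' p) hsne
  have hxS : x ∈ S := hSfin.mem_toFinset.1 hxs
  set s' := s.erase x with hs'
  by_cases hs'ne : s'.Nonempty
  · -- r' = max distance to points other than x
    set r' : ℝ := s'.sup' hs'ne (fun p => dist c' p) with hr'
    have hr'0 : 0 ≤ r' := by
      obtain ⟨p, hp⟩ := hs'ne
      exact le_trans dist_nonneg (Finset.le_sup' _ hp)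
    have hr'le : r' ≤ r + ε := by
      rw [hr', Finset.sup'_le_iff]
      intro p hp
      exact hSdist p (hSfin.mem_toFinset.1 (Finset.mem_of_mem_erase hp))
    have hr'lt : r' < dist c' x := by
      rw [hr', Finset.sup'_lt_iff]
      intro p hp
      have hpx : p ≠ x := Finset.ne_of_mem_erase hp
      have hpS : p ∈ S := hSfin.mem_toFinset.1 (Finset.mem_of_mem_erase hp)
      have hle := hxmax p (Finset.mem_of_mem_erase hp)
      rcases lt_or_eq_of_le hle with h | h
      · exact h
      · exact absurd (hinj hpS.1 hxS.1 h) hpx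
    have hkey : P ∩ Metric.closedBall c' r' = S \ {x} := by
      ext p
      constructor
      · rintro ⟨hpP, hpball⟩
        have hpd : dist c' p ≤ r' := by simpa [Metric.mem_closedBall, dist_comm] using hpball
        have hpS : p ∈ S := by
          refine ⟨hpP, ?_⟩
          by_contra hpout
          have := houtdist p hpP (by simpa using hpout)
          linarith
        refine ⟨hpS, ?_⟩
        simp only [Set.mem_singleton_iff]
        intro hpx
        rw [hpx] at hpd
        linarith
      · rintro ⟨hpS, hpx⟩
        simp only [Set.mem_singleton_iff] at hpx
        refine ⟨hpS.1, ?_⟩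
        have hps' : p ∈ s' := Finset.mem_erase.2 ⟨hpx, hSfin.mem_toFinset.2 hpS⟩
        have hle : dist c' p ≤ r' := Finset.le_sup' (fun q => dist c' q) hps'
        rw [Metric.mem_closedBall, dist_comm]
        exact hle
    refine ⟨c', r', hr'0, ?_, ?_⟩
    · rw [hkey]; exact Set.diff_subset
    · rw [hkey, Set.ncard_diff_singleton_of_mem hxS, hcard]
  · -- S = {x}, take r' = 0
    have hSx : S = {x} := by
      apply Set.eq_singleton_iff_unique_mem.2
      refine ⟨hxS, fun y hy => ?_⟩
      by_contra hyx
      exact hs'ne ⟨y, Finset.mem_erase.2 ⟨hyx, hSfin.mem_toFinset.2 hy⟩⟩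
    have hj1 : j = 1 := by rw [← hcard, hSx, Set.ncard_singleton]
    refine ⟨c', 0, le_refl 0, ?_, ?_⟩
    · intro p hp
      rw [Metric.closedBall_zero] at hp
      exact absurd (hp.2 ▸ hp.1) hc'P
    · have : P ∩ Metric.closedBall c' 0 = ∅ := by
        rw [Metric.closedBall_zero]
        ext p
        simp only [Set.mem_inter_iff, Set.mem_singleton_iff, Set.mem_empty_iff_false,
          iff_false, not_and]
        rintro hp rfl
        exact hc'P hp
      rw [this, Set.ncard_empty, hj1]
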